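/- Let a ∈ ℂ with Re(a) > 0. Then 1 ≤ |e^a - 1| / (|e^a| - 1) ≤ |a| / Re(a). -/

import Mathlib

/-- For `a ∈ ℂ` with `Re(a) > 0`: `1 ≤ |e^a - 1| / (|e^a| - 1) ≤ |a| / Re(a)`. -/
theorem exp_sub_one_abs_bounds (a : ℂ) (ha : 0 < a.re) :
    1 ≤ ‖Complex.exp a - 1‖ / (‖Complex.exp a‖ - 1) ∧
    ‖Complex.exp a - 1‖ / (‖Complex.exp a‖ - 1) ≤
      ‖a‖ / a.re := by
  set x := a.re with hx
  have habs : ‖Complex.exp a‖ = Real.exp x := Complex.norm_exp a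
  have h1 : (1:ℝ) < Real.exp x := Real.one_lt_exp_iff.mpr ha
  have hden : 0 < ‖Complex.exp a‖ - 1 := by rw [habs]; linarith
  constructor
  · rw [le_div_iff₀ hden]
    have := norm_sub_norm_le (Complex.exp a) 1
    simpa using this
  · -- key: |exp a - 1| ≤ (|a|/x) * (exp x - 1)
    have hderiv : ∀ s ∈ Set.uIcc (0:ℝ) 1,
        HasDerivAt (fun t : ℝ => Complex.exp (t * a)) (a * Complex.exp (s * a)) s := by
      intro s _
      have h1' : HasDerivAt (fun t : ℝ => (t : ℂ) * a) a s := by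
        simpa using (Complex.ofRealCLM.hasDerivAt.mul_const a (x := s))
      have := (Complex.hasDerivAt_exp ((s:ℂ) * a)).comp s h1'
      simpa [mul_comm, Function.comp_def] using this
    have hcont : Continuous (fun s : ℝ => a * Complex.exp (s * a)) := by
      continuity
    have hint : (∫ s in (0:ℝ)..1, a * Complex.exp (s * a)) = Complex.exp a - 1 := by
      have := intervalIntegral.integral_eq_sub_of_hasDerivAt hderiv
        (hcont.intervalIntegrable 0 1)
      simpa using this
    have hnorm : ∀ s : ℝ, ‖a * Complex.exp (s * a)‖
        = ‖a‖ * Real.exp (s * x) := by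
      intro s
      rw [norm_mul, Complex.norm_exp]
      congr 2
      simp [Complex.mul_re, hx]
    have hrealderiv : ∀ s ∈ Set.uIcc (0:ℝ) 1,
        HasDerivAt (fun t : ℝ => ‖a‖ / x * Real.exp (t * x))
          (‖a‖ * Real.exp (s * x)) s := by
      intro s _
      have h1' : HasDerivAt (fun t : ℝ => t * x) x s := hasDerivAt_mul_const x
      have h2' := (Real.hasDerivAt_exp (s * x)).comp s h1'
      have := h2'.const_mul (‖a‖ / x)
      refine this.congr_deriv ?_
      field_simp [ha.ne']
    have hrcont : Continuous (fun s : ℝ => ‖a‖ * Real.exp (s * x)) := by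
      continuity
    have hrint : (∫ s in (0:ℝ)..1, ‖a‖ * Real.exp (s * x))
        = ‖a‖ / x * (Real.exp x - 1) := by
      have := intervalIntegral.integral_eq_sub_of_hasDerivAt hrealderiv
        (hrcont.intervalIntegrable 0 1)
      rw [this]
      simp [mul_sub]
    have hbound : ‖Complex.exp a - 1‖
        ≤ ‖a‖ / x * (Real.exp x - 1) := by
      rw [← hint, ← hrint]
      have : ‖∫ s in (0:ℝ)..1, a * Complex.exp (s * a)‖
          ≤ ∫ s in (0:ℝ)..1, ‖a * Complex.exp (s * a)‖ :=
        intervalIntegral.norm_integral_le_integral_norm zero_le_one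
      refine this.trans_eq ?_
      apply intervalIntegral.integral_congr
      intro s _
      simpa using hnorm s
    rw [div_le_div_iff₀ hden (by positivity)]
    calc ‖Complex.exp a - 1‖ * x
        ≤ (‖a‖ / x * (Real.exp x - 1)) * x := by
          have hx1 : 0 ≤ x := ha.le
          nlinarith [hbound]
      _ = ‖a‖ * (‖Complex.exp a‖ - 1) := by
          rw [habs]; field_simp
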